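/- (Hamming-distance chain between sign cones) Let H̃ be a matrix with pairwise linearly independent rows such that there exists v ∈ ker H̃ with v ≫ 0. Define for each signature matrix Σ the cone W_Σ = {r : ΣH̃r ≥ 0}, and let W_k, W_j be two such cones with nonempty interior whose signature matrices differ in N > 1 diagonal entries (Hamming distance N). Then there exists a cone W_ℓ with nonempty interior, ℓ ≠ k, j, such that the Hamming distance from W_k's signature to W_ℓ's signature plus the Hamming distance from W_ℓ's signature to W_j's signature equals N. -/

import Mathlib

open scoped Classical

private lemma cont_row' {p ν : ℕ} (H : Matrix (Fin p) (Fin ν) ℝ) (i : Fin p) :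
    Continuous fun r : Fin ν → ℝ => H.mulVec r i := by
  simp only [Matrix.mulVec, dotProduct]
  exact continuous_finset_sum _ fun j _ => continuous_const.mul (continuous_apply j)

private lemma strict_open' {p ν : ℕ} (H : Matrix (Fin p) (Fin ν) ℝ) (σ : Fin p → ℝ) :
    IsOpen {r : Fin ν → ℝ | ∀ i, 0 < σ i * H.mulVec r i} := by
  have : {r : Fin ν → ℝ | ∀ i, 0 < σ i * H.mulVec r i}
      = ⋂ i, {r | 0 < σ i * H.mulVec r i} := by ext r; simp [Set.mem_iInter]
  rw [this]
  exact isOpen_iInter_of_finite fun i =>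
    isOpen_lt continuous_const (continuous_const.mul (cont_row' H i))

private lemma exists_pos_step' {ν : ℕ} {U : Set (Fin ν → ℝ)} (hU : IsOpen U)
    (r u : Fin ν → ℝ) (hr : r ∈ U) : ∃ δ : ℝ, 0 < δ ∧ r + δ • u ∈ U := by
  have hcont : Continuous fun δ : ℝ => r + δ • u :=
    continuous_const.add (continuous_id.smul continuous_const)
  have h0 : (fun δ : ℝ => r + δ • u) 0 ∈ U := by simpa using hr
  obtain ⟨ε, hε, hball⟩ := Metric.isOpen_iff.mp (hU.preimage hcont) 0 h0
  refine ⟨ε / 2, by linarith, hball ?_⟩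
  have : dist (ε / 2) (0 : ℝ) < ε := by
    rw [Real.dist_eq, sub_zero, abs_of_pos (by linarith)]; linarith
  exact this

private lemma strict_subset_interior' {p ν : ℕ} (H : Matrix (Fin p) (Fin ν) ℝ)
    (σ : Fin p → ℝ) (r : Fin ν → ℝ) (hr : ∀ i, 0 < σ i * H.mulVec r i) :
    r ∈ interior {r : Fin ν → ℝ | ∀ i, 0 ≤ σ i * (H.mulVec r i)} := by
  apply interior_maximal _ (strict_open' H σ) hr
  intro x hx i
  exact (hx i).le

private lemma strict_of_mem_interior' {p ν : ℕ} (H : Matrix (Fin p) (Fin ν) ℝ)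
    (σ : Fin p → ℝ) (hσ : ∀ i, σ i = 1 ∨ σ i = -1)
    (hrow : ∀ i, H i ≠ 0) (r : Fin ν → ℝ)
    (hr : r ∈ interior {r : Fin ν → ℝ | ∀ i, 0 ≤ σ i * (H.mulVec r i)}) :
    ∀ i, 0 < σ i * H.mulVec r i := by
  intro i
  have h0 : 0 ≤ σ i * H.mulVec r i := interior_subset hr i
  rcases h0.lt_or_eq with h | h
  · exact h
  · exfalso
    set w : Fin ν → ℝ := fun j => -(σ i * H i j) with hw
    have hσ2 : σ i * σ i = 1 := by rcases hσ i with h1 | h1 <;> simp [h1]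
    have hHw : σ i * H.mulVec w i = -(∑ j, H i j ^ 2) := by
      simp only [Matrix.mulVec, dotProduct, hw, Finset.mul_sum]
      rw [← Finset.sum_neg_distrib]
      refine Finset.sum_congr rfl fun j _ => ?_
      ring_nf
      nlinarith [hσ2, sq_nonneg (H i j)]
    have hpos : 0 < ∑ j, H i j ^ 2 := by
      obtain ⟨j, hj⟩ := Function.ne_iff.mp (hrow i)
      exact Finset.sum_pos' (fun j _ => sq_nonneg _)
        ⟨j, Finset.mem_univ j, by simpa using pow_pos (abs_pos.mpr hj) 2⟩
    obtain ⟨δ, hδ, hmem⟩ := exists_pos_step' isOpen_interior r w hr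
    have := interior_subset hmem i
    rw [Matrix.mulVec_add, Matrix.mulVec_smul] at this
    simp only [Pi.add_apply, Pi.smul_apply, smul_eq_mul] at this
    nlinarith [this, hHw, h]

/-- Hamming-distance chain between nonempty-interior sign cones. -/
theorem hamming_chain_between_sign_cones (p ν : ℕ)
    (H : Matrix (Fin p) (Fin ν) ℝ)
    (hindep : ∀ i i' : Fin p, i ≠ i' → ∀ t : ℝ, H i ≠ t • H i')
    (v : Fin ν → ℝ) (hvpos : ∀ j, 0 < v j) (hvker : H.mulVec v = 0)
    (σk σj : Fin p → ℝ)
    (hσk : ∀ i, σk i = 1 ∨ σk i = -1) (hσj : ∀ i, σj i = 1 ∨ σj i = -1)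
    (hintk : (interior {r : Fin ν → ℝ | ∀ i, 0 ≤ σk i * (H.mulVec r i)}).Nonempty)
    (hintj : (interior {r : Fin ν → ℝ | ∀ i, 0 ≤ σj i * (H.mulVec r i)}).Nonempty)
    (N : ℕ) (hN : 1 < N)
    (hdist : (Finset.univ.filter (fun i => σk i ≠ σj i)).card = N) :
    ∃ σℓ : Fin p → ℝ, (∀ i, σℓ i = 1 ∨ σℓ i = -1) ∧ σℓ ≠ σk ∧ σℓ ≠ σj ∧
      (interior {r : Fin ν → ℝ | ∀ i, 0 ≤ σℓ i * (H.mulVec r i)}).Nonempty ∧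
      (Finset.univ.filter (fun i => σk i ≠ σℓ i)).card +
        (Finset.univ.filter (fun i => σℓ i ≠ σj i)).card = N := by
  classical
  -- p has at least two elements
  have hp : 1 < p := by
    have h1 : N ≤ p := by
      rw [← hdist]
      calc (Finset.univ.filter (fun i => σk i ≠ σj i)).card
          ≤ (Finset.univ : Finset (Fin p)).card := Finset.card_filter_le _ _
        _ = p := by simp
    omega
  have hrow : ∀ i, H i ≠ 0 := by
    intro i h
    obtain ⟨i', hi'⟩ := Fintype.exists_ne_of_one_lt_card (by simpa using hp) i
    exact hindep i i' hi'.symm 0 (by simp [h])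
  -- strict interior points
  obtain ⟨rk, hrkI⟩ := hintk
  obtain ⟨rj, hrjI⟩ := hintj
  have hk : ∀ i, 0 < σk i * H.mulVec rk i :=
    strict_of_mem_interior' H σk hσk hrow rk hrkI
  have hjs : ∀ i, 0 < σj i * H.mulVec rj i :=
    strict_of_mem_interior' H σj hσj hrow rj hrjI
  set D : Finset (Fin p) := Finset.univ.filter (fun i => σk i ≠ σj i) with hDdef
  have hmemD : ∀ i, i ∈ D ↔ σk i ≠ σj i := fun i => by simp [hDdef]
  have hDcard : D.card = N := hdist
  obtain ⟨i1, hi1D, i2, hi2D, h12⟩ := Finset.one_lt_card.mp (hDcard ▸ hN)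
  have hflip : ∀ i ∈ D, σj i = -σk i := by
    intro i hi
    have hne := (hmemD i).mp hi
    rcases hσk i with h1 | h1 <;> rcases hσj i with h2 | h2
    · exact absurd (h1.trans h2.symm) hne
    · rw [h1, h2]
    · rw [h1, h2]; norm_num
    · exact absurd (h1.trans h2.symm) hne
  set b : Fin p → ℝ := fun i => σj i * H.mulVec rj i with hbdef
  have hb : ∀ i, 0 < b i := hjs
  -- perturbation to break ties between i1 and i2
  have key : ∃ r : Fin ν → ℝ, (∀ i, 0 < σk i * H.mulVec r i) ∧
      (σk i1 * H.mulVec r i1) * b i2 ≠ (σk i2 * H.mulVec r i2) * b i1 := by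
    by_cases hcase :
        (σk i1 * H.mulVec rk i1) * b i2 = (σk i2 * H.mulVec rk i2) * b i1
    · set u : Fin ν → ℝ := fun j => b i2 * (σk i1 * H i1 j) - b i1 * (σk i2 * H i2 j)
        with hudef
      have hσ1ne : σk i1 ≠ 0 := by rcases hσk i1 with h1 | h1 <;> rw [h1] <;> norm_num
      have hu : u ≠ 0 := by
        intro h
        apply hindep i1 i2 h12 ((b i1 * σk i2) / (b i2 * σk i1))
        funext jj
        have hj0 := congrFun h jj
        simp only [hudef, Pi.zero_apply] at hj0
        have hc : b i2 * σk i1 ≠ 0 := mul_ne_zero (hb i2).ne' hσ1ne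
        simp only [Pi.smul_apply, smul_eq_mul]
        field_simp
        rw [eq_div_iff (hb i2).ne']
        linarith [hj0]
      have hLu : (σk i1 * H.mulVec u i1) * b i2 - (σk i2 * H.mulVec u i2) * b i1
          = ∑ jj, u jj ^ 2 := by
        simp only [Matrix.mulVec, dotProduct, Finset.mul_sum, Finset.sum_mul,
          ← Finset.sum_sub_distrib]
        refine Finset.sum_congr rfl fun jj _ => ?_
        simp only [hudef]; ring
      have hupos : 0 < ∑ jj, u jj ^ 2 := by
        obtain ⟨jj, hjj⟩ := Function.ne_iff.mp hu
        exact Finset.sum_pos' (fun _ _ => sq_nonneg _)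
          ⟨jj, Finset.mem_univ _, by simpa [sq_abs] using pow_pos (abs_pos.mpr hjj) 2⟩
      obtain ⟨δ, hδ, hmem⟩ := exists_pos_step' (strict_open' H σk) rk u hk
      refine ⟨rk + δ • u, hmem, ?_⟩
      have e1 : ∀ i, σk i * H.mulVec (rk + δ • u) i
          = σk i * H.mulVec rk i + δ * (σk i * H.mulVec u i) := by
        intro i
        rw [Matrix.mulVec_add, Matrix.mulVec_smul]
        simp only [Pi.add_apply, Pi.smul_apply, smul_eq_mul]
        ring
      rw [e1 i1, e1 i2]
      intro hEq
      nlinarith [mul_pos hδ hupos, hcase, hLu, hEq]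
    · exact ⟨rk, hk, hcase⟩
  obtain ⟨r, ha, hne12⟩ := key
  set a : Fin p → ℝ := fun i => σk i * H.mulVec r i with hadef
  have hab : ∀ i, 0 < a i + b i := fun i => add_pos (ha i) (hb i)
  set t : Fin p → ℝ := fun i => a i / (a i + b i) with htdef
  have ht0 : ∀ i, 0 < t i := fun i => div_pos (ha i) (hab i)
  have ht1 : ∀ i, t i < 1 := fun i => (div_lt_one (hab i)).mpr (by linarith [hb i])
  obtain ⟨i0, hi0D, hi0min⟩ := Finset.exists_min_image D t ⟨i1, hi1D⟩
  set S : Finset (Fin p) := D.filter (fun i => t i = t i0) with hSdef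
  have hi0S : i0 ∈ S := by simp [hSdef, hi0D]
  have hSsub : S ⊆ D := Finset.filter_subset _ _
  have ht12 : t i1 ≠ t i2 := by
    intro hEq
    apply hne12
    have h2 := (div_eq_div_iff (hab i1).ne' (hab i2).ne').mp hEq
    show a i1 * b i2 = a i2 * b i1
    nlinarith [h2]
  have hDS : (D \ S).Nonempty := by
    rcases em (i1 ∈ S) with h | h
    · refine ⟨i2, Finset.mem_sdiff.mpr ⟨hi2D, fun h2 => ?_⟩⟩
      apply ht12
      rw [(Finset.mem_filter.mp h).2, (Finset.mem_filter.mp h2).2]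
    · exact ⟨i1, Finset.mem_sdiff.mpr ⟨hi1D, h⟩⟩
  obtain ⟨i4, hi4, hi4min⟩ := Finset.exists_min_image (D \ S) t hDS
  have hi4D : i4 ∈ D := (Finset.mem_sdiff.mp hi4).1
  have hi4S : i4 ∉ S := (Finset.mem_sdiff.mp hi4).2
  have hlt : t i0 < t i4 :=
    lt_of_le_of_ne (hi0min i4 hi4D)
      (fun h => hi4S (Finset.mem_filter.mpr ⟨hi4D, h.symm⟩))
  set ts : ℝ := (t i0 + t i4) / 2 with htsdef
  have hts1 : t i0 < ts := by rw [htsdef]; linarith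
  have hts2 : ts < t i4 := by rw [htsdef]; linarith
  have hts0 : 0 < ts := lt_trans (ht0 i0) hts1
  have htslt1 : ts < 1 := lt_trans hts2 (ht1 i4)
  set rstar : Fin ν → ℝ := (1 - ts) • r + ts • rj with hrs
  have hval : ∀ i, σk i * H.mulVec rstar i
      = (1 - ts) * a i + ts * (σk i * H.mulVec rj i) := by
    intro i
    rw [hrs, Matrix.mulVec_add, Matrix.mulVec_smul, Matrix.mulVec_smul]
    simp only [Pi.add_apply, Pi.smul_apply, smul_eq_mul, hadef]
    ring
  have hvalD : ∀ i ∈ D, σk i * H.mulVec rstar i = (1 - ts) * a i - ts * b i := by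
    intro i hi
    rw [hval i]
    have hk' : σk i = -σj i := by rw [hflip i hi]; ring
    rw [hk', hbdef]
    ring
  have hposS : ∀ i ∈ S, σk i * H.mulVec rstar i < 0 := by
    intro i hi
    have hiD := hSsub hi
    rw [hvalD i hiD]
    have hti : t i < ts := by rw [(Finset.mem_filter.mp hi).2]; exact hts1
    have h2 : a i < ts * (a i + b i) := by
      rw [← div_lt_iff₀ (hab i)]
      simpa [htdef] using hti
    linarith
  have hposDS : ∀ i ∈ D, i ∉ S → 0 < σk i * H.mulVec rstar i := by
    intro i hiD hiS
    rw [hvalD i hiD]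
    have hti : ts < t i := lt_of_lt_of_le hts2 (hi4min i (Finset.mem_sdiff.mpr ⟨hiD, hiS⟩))
    have h2 : ts * (a i + b i) < a i := by
      rw [← lt_div_iff₀ (hab i)]
      simpa [htdef] using hti
    linarith
  have hposnD : ∀ i, i ∉ D → 0 < σk i * H.mulVec rstar i := by
    intro i hiD
    have heq : σk i = σj i := by
      by_contra hc
      exact hiD ((hmemD i).mpr hc)
    rw [hval i, heq]
    have hbi : 0 < σj i * H.mulVec rj i := hb i
    have hai : 0 < a i := ha i
    have h1m : (0:ℝ) < 1 - ts := by linarith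
    have := mul_pos h1m hai
    have := mul_pos hts0 hbi
    linarith
  refine ⟨fun i => if i ∈ S then -σk i else σk i, ?_, ?_, ?_, ?_, ?_⟩
  · intro i
    rcases hσk i with h1 | h1 <;> by_cases h : i ∈ S <;> simp [h, h1]
  · intro hEq
    have := congrFun hEq i0
    simp only [hi0S, if_pos] at this
    rcases hσk i0 with h1 | h1 <;> rw [h1] at this <;> norm_num at this
  · intro hEq
    have := congrFun hEq i4
    simp only [hi4S, if_neg, not_false_iff] at this
    exact ((hmemD i4).mp hi4D) this
  · refine ⟨rstar, strict_subset_interior' H _ rstar ?_⟩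
    intro i
    by_cases h : i ∈ S
    · rw [if_pos h, neg_mul]
      linarith [hposS i h]
    · rw [if_neg h]
      by_cases hD' : i ∈ D
      · exact hposDS i hD' h
      · exact hposnD i hD'
  · have hS1 : (Finset.univ.filter (fun i => σk i ≠ if i ∈ S then -σk i else σk i)) = S := by
      ext i
      simp only [Finset.mem_filter, Finset.mem_univ, true_and]
      by_cases h : i ∈ S
      · rw [if_pos h]
        simp only [h, iff_true]
        rcases hσk i with h1 | h1 <;> rw [h1] <;> norm_num
      · rw [if_neg h]
        simp [h]
    have hS2 : (Finset.univ.filter (fun i => (if i ∈ S then -σk i else σk i) ≠ σj i))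
        = D \ S := by
      ext i
      simp only [Finset.mem_filter, Finset.mem_univ, true_and, Finset.mem_sdiff]
      by_cases h : i ∈ S
      · have hiD := hSsub h
        have hfl := hflip i hiD
        rw [if_pos h]
        simp [h, hfl]
      · rw [if_neg h]
        simp only [h, not_false_iff, and_true]
        exact ⟨fun hc => (hmemD i).mpr hc, fun hc => (hmemD i).mp hc⟩
    rw [hS1, hS2]
    have := Finset.card_sdiff_add_card_eq_card hSsub
    omega
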